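/- Let R be a finitely generated subring of k. For any prime number ℓ, the ring homomorphism Ψ_ℓ: R → ∏_{p ≥ ℓ} ∏_{ψ: R → F̄_p} F̄_p, given by the product over all primes p ≥ ℓ and all ring homomorphisms ψ: R → F̄_p of the maps ψ, is injective. -/

import Mathlib

open TensorProduct

lemma int_isJacobsonRing : IsJacobsonRing ℤ := by
  rw [isJacobsonRing_iff_prime_eq]
  intro P hP
  by_cases hPb : P = ⊥
  · subst hPb
    refine le_antisymm ?_ Ideal.le_jacobson
    intro x hx
    have h1 := Ideal.mem_jacobson_bot.mp hx 1
    have h2 := Ideal.mem_jacobson_bot.mp hx (-1)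
    rw [Int.isUnit_iff] at h1 h2
    have : x = 0 := by omega
    simp [this]
  · haveI := IsPrime.to_maximal_ideal hPb
    exact Ideal.jacobson_eq_self_of_isMaximal

set_option maxHeartbeats 1000000
set_option synthInstance.maxHeartbeats 400000

section Aux

variable {k : Type} [Field k] [CharZero k] (R : Subring k)

/-- Key auxiliary lemma: given a nonzero `a` in a finitely generated subring `R` of a
characteristic zero field, there is a prime `p ≥ ℓ` and a homomorphism from `R` to a field of
characteristic `p` not killing `a`. -/
lemma aux_exists_hom (hfg : ∃ s : Finset k, Subring.closure (s : Set k) = R)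
    (ℓ : ℕ) (hℓ : ℓ.Prime) (r : R) (hr0 : r ≠ 0) :
    ∃ (p : ℕ) (_ : p.Prime) (_ : ℓ ≤ p) (K : Type) (_ : Field K) (_ : CharP K p)
      (_ : ∀ z : K, IsIntegral ℤ z) (π : R →+* K), π r ≠ 0 := by
  haveI := int_isJacobsonRing
  have hNR : (((ℓ - 1).factorial : ℕ) : R) ≠ 0 :=
    Nat.cast_ne_zero.mpr (Nat.factorial_ne_zero _)
  have ha : r * (((ℓ - 1).factorial : ℕ) : R) ≠ 0 := mul_ne_zero hr0 hNR
  set a : R := r * (((ℓ - 1).factorial : ℕ) : R) with ha_def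
  have hinj : Function.Injective (algebraMap R (Localization.Away a)) :=
    IsLocalization.injective _ (powers_le_nonZeroDivisors_of_noZeroDivisors ha)
  haveI : Nontrivial (Localization.Away a) :=
    ⟨⟨algebraMap R _ 0, algebraMap R _ 1, fun e => zero_ne_one (hinj e)⟩⟩
  obtain ⟨m, hm⟩ := Ideal.exists_maximal (Localization.Away a)
  letI : Field (Localization.Away a ⧸ m) := Ideal.Quotient.field m
  haveI hftR : Algebra.FiniteType ℤ R := by
    obtain ⟨s, hs⟩ := hfg
    have h1 : Algebra.FiniteType ℤ (Algebra.adjoin ℤ (s : Set k)) :=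
      (Subalgebra.fg_iff_finiteType _).mp (Subalgebra.fg_adjoin_finset s)
    have e : (Subring.closure (s : Set k)) ≃ₐ[ℤ] Algebra.adjoin ℤ (s : Set k) :=
      Subring.closureEquivAdjoinInt (s : Set k)
    rw [hs] at e
    exact Algebra.FiniteType.equiv h1 e.symm
  haveI : Algebra.FiniteType R (Localization.Away a) :=
    IsLocalization.finiteType_of_monoid_fg (Submonoid.powers a) _
  haveI : Algebra.FiniteType ℤ (Localization.Away a) := Algebra.FiniteType.trans hftR ‹_›
  haveI : Algebra.FiniteType ℤ (Localization.Away a ⧸ m) :=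
    Algebra.FiniteType.of_surjective
      (Ideal.Quotient.mkₐ ℤ m) (Ideal.Quotient.mkₐ_surjective ℤ m)
  haveI hMF := finite_of_finite_type_of_isJacobsonRing ℤ (Localization.Away a ⧸ m)
  set π : R →+* Localization.Away a ⧸ m :=
    (Ideal.Quotient.mk m).comp (algebraMap R (Localization.Away a)) with hπ
  have hua : IsUnit (π a) :=
    (IsLocalization.Away.algebraMap_isUnit (S := Localization.Away a) a).map
      (Ideal.Quotient.mk m)
  have haK : π a ≠ 0 := hua.ne_zero
  have hrK : π r ≠ 0 := by
    intro hz
    apply haK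
    show π (r * _) = 0
    rw [map_mul, hz, zero_mul]
  have hNK : (((ℓ - 1).factorial : ℕ) : Localization.Away a ⧸ m) ≠ 0 := by
    intro hz
    apply haK
    show π (r * _) = 0
    rw [map_mul, map_natCast, hz, mul_zero]
  -- the characteristic of the residue field
  haveI hcharp : CharP (Localization.Away a ⧸ m) (ringChar (Localization.Away a ⧸ m)) :=
    ringChar.charP _
  rcases CharP.char_is_prime_or_zero (Localization.Away a ⧸ m)
      (ringChar (Localization.Away a ⧸ m)) with hp | hp
  · refine ⟨ringChar (Localization.Away a ⧸ m), hp, ?_, Localization.Away a ⧸ m,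
      inferInstance, hcharp, fun z => by
        have he : (Ideal.Quotient.algebra ℤ : Algebra ℤ (Localization.Away a ⧸ m))
            = Ring.toIntAlgebra (Localization.Away a ⧸ m) := Subsingleton.elim _ _
        exact he ▸ IsIntegral.of_finite ℤ z, π, hrK⟩
    by_contra hlt
    push_neg at hlt
    have hdvd : ringChar (Localization.Away a ⧸ m) ∣ (ℓ - 1).factorial :=
      Nat.dvd_factorial hp.pos (by have := hℓ.two_le; omega)
    obtain ⟨c, hc⟩ := hdvd
    apply hNK
    rw [hc]
    push_cast
    rw [CharP.cast_eq_zero (Localization.Away a ⧸ m), zero_mul]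
  · -- characteristic zero residue field: impossible
    exfalso
    haveI : CharP (Localization.Away a ⧸ m) 0 := hp ▸ hcharp
    haveI : CharZero (Localization.Away a ⧸ m) := CharP.charP_to_charZero _
    haveI : Algebra.IsIntegral ℤ (Localization.Away a ⧸ m) :=
      Algebra.IsIntegral.of_finite ℤ _
    have hinjZ : Function.Injective (algebraMap ℤ (Localization.Away a ⧸ m)) := by
      rw [show (algebraMap ℤ (Localization.Away a ⧸ m)) =
        Int.castRingHom (Localization.Away a ⧸ m) from RingHom.ext_int _ _]
      exact Int.cast_injective
    exact Int.not_isField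
      (isField_of_isIntegral_of_isField hinjZ (Field.toIsField (Localization.Away a ⧸ m)))

end Aux

/-- Let `R` be a finitely generated subring of an algebraically closed field `k` of
characteristic zero.  For any prime `ℓ`, the homomorphism
`Ψ_ℓ : R → ∏_{p ≥ ℓ} ∏_{ψ : R → F̄_p} F̄_p` given by the product of all the `ψ`'s
is injective. -/
theorem product_of_reductions_mod_p_injective
    (k : Type) [Field k] [IsAlgClosed k] [CharZero k]
    (R : Subring k) (hfg : ∃ s : Finset k, Subring.closure (s : Set k) = R)
    (ℓ : ℕ) (hℓ : ℓ.Prime) :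
    ∀ x y : R,
      (∀ (p : ℕ) (hp : p.Prime), ℓ ≤ p →
        haveI : Fact p.Prime := ⟨hp⟩
        ∀ ψ : R →+* AlgebraicClosure (ZMod p), ψ x = ψ y) →
      x = y := by
  intro x y h
  by_contra hxy
  have hr0 : x - y ≠ 0 := sub_ne_zero.mpr hxy
  obtain ⟨p, hp, hℓp, K, hK, hKp, hKI, π, hπ⟩ := aux_exists_hom R hfg ℓ hℓ (x - y) hr0
  haveI : Fact p.Prime := ⟨hp⟩
  letI : Algebra (ZMod p) K := ZMod.algebra _ p
  haveI : IsScalarTower ℤ (ZMod p) K :=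
    IsScalarTower.of_algebraMap_eq' (RingHom.ext_int _ _)
  haveI : Algebra.IsAlgebraic (ZMod p) K :=
    ⟨fun z => ((hKI z).tower_top).isAlgebraic⟩
  haveI : NoZeroSMulDivisors (ZMod p) K :=
    inferInstance
  haveI : NoZeroSMulDivisors (ZMod p) (AlgebraicClosure (ZMod p)) :=
    inferInstance
  let φ : K →ₐ[ZMod p] AlgebraicClosure (ZMod p) := IsAlgClosed.lift
  have hψ := h p hp hℓp (φ.toRingHom.comp π)
  have h0 : (φ.toRingHom.comp π) (x - y) = 0 := by
    rw [map_sub, hψ, sub_self]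
  exact hπ (φ.toRingHom.injective
    (show φ.toRingHom (π (x - y)) = φ.toRingHom 0 by rw [map_zero]; exact h0))
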